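/- Key inequality for greedy analysis: if f is monotone submodular with f(∅)=0, OPT is an optimal set of size k, and S is any set, then there exists v ∉ S with f(S∪{v}) - f(S) ≥ (f(OPT) - f(S))/k. -/
import Mathlib


open Finset

/-- Diminishing-returns submodularity for set functions on a finite ground set. -/
def Submodular {V : Type*} [DecidableEq V] (f : Finset V → ℝ) : Prop :=
  ∀ (A B : Finset V) (v : V), A ⊆ B → v ∉ B →
    f (insert v B) - f B ≤ f (insert v A) - f A

lemma marginal_sum {V : Type*} [DecidableEq V] (f : Finset V → ℝ)
    (hsub : Submodular f) (S : Finset V) :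
    ∀ T : Finset V, f (S ∪ T) - f S ≤ ∑ v ∈ T \ S, (f (insert v S) - f S) := by
  intro T
  induction T using Finset.induction_on with
  | empty => simp
  | @insert a T ha ih =>
    by_cases haS : a ∈ S
    · have h1 : S ∪ insert a T = S ∪ T := by
        ext x; simp only [Finset.mem_union, Finset.mem_insert]
        constructor
        · rintro (h | rfl | h) <;> simp_all
        · rintro (h | h) <;> simp_all
      have h2 : insert a T \ S = T \ S := by
        ext x; simp only [Finset.mem_sdiff, Finset.mem_insert]
        constructor
        · rintro ⟨rfl | h, hx⟩ <;> simp_all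
        · rintro ⟨h, hx⟩; exact ⟨Or.inr h, hx⟩
      rw [h1, h2]; exact ih
    · have h1 : S ∪ insert a T = insert a (S ∪ T) := Finset.union_insert _ _ _
      have h2 : insert a T \ S = insert a (T \ S) := by
        ext x
        simp only [Finset.mem_sdiff, Finset.mem_insert]
        constructor
        · rintro ⟨rfl | h, h2⟩
          · exact Or.inl rfl
          · exact Or.inr ⟨h, h2⟩
        · rintro (rfl | ⟨h, h2⟩)
          · exact ⟨Or.inl rfl, haS⟩
          · exact ⟨Or.inr h, h2⟩
      by_cases haT : a ∈ S ∪ T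
      · have : a ∈ T := by simp_all [Finset.mem_union]
        exact absurd this ‹a ∉ T›
      · rw [h1, h2, Finset.sum_insert (by simp only [Finset.mem_sdiff, not_and]; intro h; exact absurd h ha)]
        have hstep : f (insert a (S ∪ T)) - f (S ∪ T) ≤ f (insert a S) - f S :=
          hsub S (S ∪ T) a (Finset.subset_union_left) haT
        linarith

/-- Key inequality for the greedy analysis: if `f` is monotone submodular with
`f(∅) = 0`, and `OPT` is an optimal set of size `k`, then for any (proper) set `S`
there exists `v ∉ S` with `f(S ∪ {v}) - f(S) ≥ (f(OPT) - f(S)) / k`. -/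
theorem greedy_key_inequality {V : Type*} [Fintype V] [DecidableEq V]
    (f : Finset V → ℝ) (hmono : ∀ A B : Finset V, A ⊆ B → f A ≤ f B)
    (hsub : Submodular f) (hf0 : f ∅ = 0)
    (k : ℕ) (hk : 0 < k) (OPT : Finset V) (hOPTcard : OPT.card = k)
    (hOPT : ∀ A : Finset V, A.card ≤ k → f A ≤ f OPT)
    (S : Finset V) (hS : S ≠ Finset.univ) :
    ∃ v ∉ S, (f OPT - f S) / (k : ℝ) ≤ f (insert v S) - f S := by
  have hkpos : (0 : ℝ) < (k : ℝ) := by exact_mod_cast hk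
  by_cases hne : (OPT \ S).Nonempty
  · obtain ⟨v, hvmem, hvmax⟩ :=
      Finset.exists_max_image (OPT \ S) (fun v => f (insert v S) - f S) hne
    have hvS : v ∉ S := (Finset.mem_sdiff.mp hvmem).2
    refine ⟨v, hvS, ?_⟩
    have hsum := marginal_sum f hsub S OPT
    have hbound : ∑ w ∈ OPT \ S, (f (insert w S) - f S) ≤
        (OPT \ S).card * (f (insert v S) - f S) := by
      calc ∑ w ∈ OPT \ S, (f (insert w S) - f S)
          ≤ ∑ w ∈ OPT \ S, (f (insert v S) - f S) :=
            Finset.sum_le_sum fun w hw => hvmax w hw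
        _ = (OPT \ S).card * (f (insert v S) - f S) := by
            rw [Finset.sum_const, nsmul_eq_mul]
    have hgain : 0 ≤ f (insert v S) - f S := by
      have := hmono S (insert v S) (Finset.subset_insert v S)
      linarith
    have hcard : ((OPT \ S).card : ℝ) ≤ (k : ℝ) := by
      have : (OPT \ S).card ≤ OPT.card := Finset.card_le_card (Finset.sdiff_subset)
      exact_mod_cast this.trans_eq hOPTcard
    have hopt : f OPT ≤ f (S ∪ OPT) := hmono OPT (S ∪ OPT) (Finset.subset_union_right)
    have h1 : f OPT - f S ≤ (k : ℝ) * (f (insert v S) - f S) := by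
      have : ((OPT \ S).card : ℝ) * (f (insert v S) - f S) ≤
          (k : ℝ) * (f (insert v S) - f S) := by
        exact mul_le_mul_of_nonneg_right hcard hgain
      linarith
    rw [div_le_iff₀ hkpos] at *
    linarith [h1]
  · -- OPT ⊆ S; pick any v ∉ S
    have hsub' : OPT ⊆ S := by
      intro x hx
      by_contra hxs
      exact hne ⟨x, Finset.mem_sdiff.mpr ⟨hx, hxs⟩⟩
    obtain ⟨v, hv⟩ : ∃ v, v ∉ S := by
      by_contra h
      push_neg at h
      exact hS (Finset.eq_univ_iff_forall.mpr h)
    refine ⟨v, hv, ?_⟩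
    have h1 : f OPT ≤ f S := hmono OPT S hsub'
    have h2 : f S ≤ f (insert v S) := hmono S _ (Finset.subset_insert v S)
    have : (f OPT - f S) / (k : ℝ) ≤ 0 := by
      apply div_nonpos_of_nonpos_of_nonneg <;> linarith
    linarith
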